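/- Let E ⊆ [0,∞). Then E is completely strongly porous if and only if there exist q > 1 and a strictly decreasing sequence {xₙ} of positive reals with x_{n+1}/xₙ → 0 such that E ⊑ W(q), where W(q) := ⋃_{n∈ℕ} (q⁻¹xₙ, qxₙ) and A ⊑ B means there is t > 0 with A ∩ (0,t) ⊆ B ∩ (0,t). -/

import Mathlib

open Filter Set Topology ENNReal

/-- λ(E,0,h): the supremum of lengths of open subintervals of (0,h) disjoint from E. -/
noncomputable def lambda0 (E : Set ℝ) (h : ℝ) : ℝ :=
  sSup {l : ℝ | ∃ a b : ℝ, 0 ≤ a ∧ a ≤ b ∧ b ≤ h ∧ Set.Ioo a b ∩ E = ∅ ∧ l = b - a}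

/-- p⁺(E,0): the right porosity of E at 0. -/
noncomputable def porosity (E : Set ℝ) : ℝ :=
  Filter.limsup (fun h => lambda0 E h / h) (nhdsWithin 0 (Set.Ioi 0))

/-- 0 is an accumulation point of E (E ⊆ [0,∞), relative topology of [0,∞)). -/
def AccZero (E : Set ℝ) : Prop := ∀ ε > 0, ∃ x ∈ E, 0 < x ∧ x < ε

/-- (a,b) is a connected component of the exterior of E in [0,∞):
an open interval in [0,∞) disjoint from E, maximal with this property. -/
def IsCompExt (E : Set ℝ) (a b : ℝ) : Prop :=
  0 ≤ a ∧ a < b ∧ Set.Ioo a b ∩ E = ∅ ∧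
  ∀ c d : ℝ, 0 ≤ c → Set.Ioo a b ⊆ Set.Ioo c d → (c, d) ≠ (a, b) → Set.Ioo c d ∩ E ≠ ∅

/-- Membership in Ĩ_E. -/
def memIE (E : Set ℝ) (A : ℕ → ℝ × ℝ) : Prop :=
  (∀ n, 0 < (A n).1) ∧ (∀ n, IsCompExt E (A n).1 (A n).2) ∧
  Filter.Tendsto (fun n => (A n).1) Filter.atTop (nhds 0) ∧
  Filter.Tendsto (fun n => ((A n).2 - (A n).1) / (A n).2) Filter.atTop (nhds 1)

/-- Almost decreasing sequence: eventually nonincreasing. -/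
def AlmostDecr (τ : ℕ → ℝ) : Prop := ∀ᶠ n in Filter.atTop, τ (n + 1) ≤ τ n

/-- Membership in Ẽ₀^d: almost decreasing sequences in E∖{0} tending to 0. -/
def memE0d (E : Set ℝ) (τ : ℕ → ℝ) : Prop :=
  AlmostDecr τ ∧ Filter.Tendsto τ Filter.atTop (nhds 0) ∧ ∀ n, τ n ∈ E \ {0}

/-- Weak equivalence ≍ of sequences: c₁ aₙ ≤ γₙ ≤ c₂ aₙ for large n. -/
def SeqEquiv (a γ : ℕ → ℝ) : Prop :=
  ∃ c₁ c₂ : ℝ, 0 < c₁ ∧ 0 < c₂ ∧ ∀ᶠ n in Filter.atTop, c₁ * a n ≤ γ n ∧ γ n ≤ c₂ * a n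

/-- E is τ̃-strongly porous. -/
def StronglyPorousWrt (E : Set ℝ) (τ : ℕ → ℝ) : Prop :=
  ∃ A : ℕ → ℝ × ℝ, memIE E A ∧ SeqEquiv (fun n => (A n).1) τ

/-- E is completely strongly porous at 0. -/
def CSP (E : Set ℝ) : Prop := ∀ τ : ℕ → ℝ, memE0d E τ → StronglyPorousWrt E τ

/-- Membership in Ĩ_E^d: first coordinates almost decreasing. -/
def memIEd (E : Set ℝ) (A : ℕ → ℝ × ℝ) : Prop := memIE E A ∧ AlmostDecr (fun n => (A n).1)

/-- Membership in Ĩ_E^{sd}: first coordinates eventually strictly decreasing. -/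
def memIEsd (E : Set ℝ) (A : ℕ → ℝ × ℝ) : Prop :=
  memIE E A ∧ ∀ᶠ n in Filter.atTop, (A (n + 1)).1 < (A n).1

/-- The preorder Ã ⪯ L̃. -/
def Prec (A L : ℕ → ℝ × ℝ) : Prop :=
  ∃ N₁ : ℕ, ∃ f : ℕ → ℕ, ∀ n ≥ N₁, (A n).1 = (L (f n)).1

/-- L̃ is universal: every Ã ∈ Ĩ_E^d satisfies Ã ⪯ L̃. -/
def Universal (E : Set ℝ) (L : ℕ → ℝ × ℝ) : Prop :=
  ∀ A : ℕ → ℝ × ℝ, memIEd E A → Prec A L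

/-- M(L̃) = limsup lₙ/mₙ₊₁ (in [0,∞]). -/
noncomputable def Mq (L : ℕ → ℝ × ℝ) : ℝ≥0∞ :=
  Filter.limsup (fun n => ENNReal.ofReal ((L n).1 / (L (n + 1)).2)) Filter.atTop

/-- C(τ̃) = inf over {(aₙ,bₙ)} ∈ Ĩ_E with τₙ ≤ aₙ eventually of limsup aₙ/τₙ. -/
noncomputable def Cseq (E : Set ℝ) (τ : ℕ → ℝ) : ℝ≥0∞ :=
  ⨅ (A : ℕ → ℝ × ℝ) (_ : memIE E A ∧ ∀ᶠ n in Filter.atTop, τ n ≤ (A n).1),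
    Filter.limsup (fun n => ENNReal.ofReal ((A n).1 / τ n)) Filter.atTop

/-- C_E = sup over τ̃ ∈ Ẽ₀^d of C(τ̃). -/
noncomputable def CE (E : Set ℝ) : ℝ≥0∞ := ⨆ (τ : ℕ → ℝ) (_ : memE0d E τ), Cseq E τ

/-- E is uniformly strongly porous at 0. -/
def USP (E : Set ℝ) : Prop :=
  ∃ c : ℝ, 0 < c ∧ ∀ τ : ℕ → ℝ, memE0d E τ → ∃ A : ℕ → ℝ × ℝ, memIE E A ∧
    (∀ᶠ n in Filter.atTop, τ n ≤ (A n).1) ∧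
    Filter.limsup (fun n => ENNReal.ofReal ((A n).1 / τ n)) Filter.atTop ≤ ENNReal.ofReal c

open Filter Set Topology ENNReal

/-- Iteratively selecting indices by `Nat.find`. -/
lemma chainRec (P : ℕ → ℕ → Prop) [∀ j n, Decidable (P j n)] (n₀ : ℕ)
    (hex : ∀ j, ∃ n, j < n ∧ P j n) :
    ∃ u : ℕ → ℕ, u 0 = n₀ ∧ (∀ k, u k < u (k + 1) ∧ P (u k) (u (k + 1)) ∧
      ∀ n, u k < n → n < u (k + 1) → ¬ P (u k) n) ∧
      ∀ n, n₀ ≤ n → ∃ k, u k ≤ n ∧ n < u (k + 1) := by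
  set u : ℕ → ℕ := fun k => Nat.rec n₀ (fun _ prev => Nat.find (hex prev)) k with hu
  have hsucc : ∀ k, u (k + 1) = Nat.find (hex (u k)) := fun k => rfl
  have hspec : ∀ k, u k < u (k + 1) ∧ P (u k) (u (k + 1)) := by
    intro k; rw [hsucc]; exact Nat.find_spec (hex (u k))
  refine ⟨u, rfl, fun k => ⟨(hspec k).1, (hspec k).2, ?_⟩, ?_⟩
  · intro n h1 h2 hP
    have := Nat.find_min (hex (u k)) (by rw [hsucc] at h2; exact h2)
    exact this ⟨h1, hP⟩
  · have h0 : u 0 = n₀ := rfl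
    intro n hn
    induction n with
    | zero =>
        refine ⟨0, ?_, ?_⟩
        · simpa [h0] using hn
        · have := (hspec 0).1; omega
    | succ m ih =>
        rcases Nat.lt_or_ge m n₀ with h | h
        · have : n₀ = m + 1 := by omega
          exact ⟨0, by omega, by have := (hspec 0).1; omega⟩
        · obtain ⟨k, hk1, hk2⟩ := ih h
          rcases Nat.lt_or_ge (m + 1) (u (k + 1)) with h2 | h2
          · exact ⟨k, by omega, h2⟩
          · have : m + 1 = u (k + 1) := by omega
            exact ⟨k + 1, by omega, by have := (hspec (k + 1)).1; omega⟩

lemma memIE_b_pos {E : Set ℝ} {A : ℕ → ℝ × ℝ} (h : memIE E A) (n : ℕ) : 0 < (A n).2 :=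
  lt_trans (h.1 n) (h.2.1 n).2.1

/-- From `(b-a)/b → 1` we get `C·a < b` eventually. -/
lemma big_gap {E : Set ℝ} {A : ℕ → ℝ × ℝ} (h : memIE E A) {C : ℝ} (hC : 0 < C) :
    ∀ᶠ n in atTop, C * (A n).1 < (A n).2 := by
  have h1 : ∀ᶠ n in atTop, 1 - C⁻¹ < ((A n).2 - (A n).1) / (A n).2 :=
    h.2.2.2.eventually (eventually_gt_nhds (by
      have : 0 < C⁻¹ := inv_pos.mpr hC; linarith))
  filter_upwards [h1] with n hn
  have hb : 0 < (A n).2 := memIE_b_pos h n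
  have h2 : (1 - C⁻¹) * (A n).2 < (A n).2 - (A n).1 := (lt_div_iff₀ hb).mp hn
  have h3 : (A n).1 < C⁻¹ * (A n).2 := by nlinarith
  calc C * (A n).1 < C * (C⁻¹ * (A n).2) := by
        exact mul_lt_mul_of_pos_left h3 hC
    _ = (A n).2 := by field_simp

/-- Adjust weak-equivalence constants. -/
lemma seqEquiv_adjust {a τ : ℕ → ℝ} (h : SeqEquiv a τ) (hp : ∀ n, 0 < a n) :
    ∃ c₁ c₂ : ℝ, 0 < c₁ ∧ c₁ ≤ 1 / 2 ∧ 1 ≤ c₂ ∧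
      ∀ᶠ n in atTop, c₁ * a n ≤ τ n ∧ τ n ≤ c₂ * a n := by
  obtain ⟨c₁, c₂, hc₁, hc₂, hev⟩ := h
  refine ⟨min c₁ (1 / 2), max c₂ 1, lt_min hc₁ (by norm_num), min_le_right _ _,
    le_max_right _ _, ?_⟩
  filter_upwards [hev] with n ⟨h1, h2⟩
  constructor
  · exact le_trans (mul_le_mul_of_nonneg_right (min_le_left _ _) (hp n).le) h1
  · exact le_trans h2 (mul_le_mul_of_nonneg_right (le_max_left _ _) (hp n).le)
section Bwd

variable {E : Set ℝ}

lemma bwdDir (hE : E ⊆ Set.Ici 0) {q : ℝ} (hq : 1 < q) {x : ℕ → ℝ}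
    (hxa : StrictAnti x) (hxp : ∀ n, 0 < x n)
    (hxr : Tendsto (fun n => x (n + 1) / x n) atTop (nhds 0))
    {t : ℝ} (ht : 0 < t)
    (hcov : E ∩ Set.Ioo 0 t ⊆ (⋃ n : ℕ, Set.Ioo (q⁻¹ * x n) (q * x n)) ∩ Set.Ioo 0 t) :
    CSP E := by
  intro τ hτ
  obtain ⟨hdec, hτ0, hmem⟩ := hτ
  have hq0 : 0 < q := lt_trans one_pos hq
  have hqi : 0 < q⁻¹ := inv_pos.mpr hq0
  have hτpos : ∀ n, 0 < τ n := fun n =>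
    lt_of_le_of_ne (hE (hmem n).1) (Ne.symm (hmem n).2)
  have cover : ∀ e, e ∈ E → 0 < e → e < t → ∃ m, q⁻¹ * x m < e ∧ e < q * x m := by
    intro e he h0 h1
    have h2 := hcov ⟨he, h0, h1⟩
    obtain ⟨m, hm⟩ := Set.mem_iUnion.mp h2.1
    exact ⟨m, hm.1, hm.2⟩
  -- ratio control
  obtain ⟨K₁, hK₁⟩ := eventually_atTop.mp
    (hxr.eventually (eventually_lt_nhds (show (0:ℝ) < q⁻¹ * q⁻¹ by positivity)))
  have hK₁' : ∀ m, K₁ ≤ m → x (m + 1) < q⁻¹ * q⁻¹ * x m := by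
    intro m hm
    have h := hK₁ m hm
    rw [div_lt_iff₀ (hxp m)] at h
    exact h
  -- choose the covering index for each n
  have kch : ∀ n, ∃ m, τ n < t → q⁻¹ * x m < τ n ∧ τ n < q * x m := by
    intro n
    by_cases h : τ n < t
    · obtain ⟨m, hm⟩ := cover (τ n) (hmem n).1 (hτpos n) h
      exact ⟨m, fun _ => hm⟩
    · exact ⟨0, fun h' => absurd h' h⟩
  choose k hk using kch
  -- k n is eventually large
  have klarge : ∀ M : ℕ, ∀ᶠ n in atTop, M < k n := by
    intro M
    have h1 : ∀ᶠ n in atTop, q * τ n < x M ∧ τ n < t := by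
      have h0 : Tendsto (fun n => q * τ n) atTop (nhds 0) := by
        simpa using hτ0.const_mul q
      filter_upwards [h0.eventually (eventually_lt_nhds (hxp M)),
        hτ0.eventually (eventually_lt_nhds ht)] with n h1 h2
      exact ⟨h1, h2⟩
    filter_upwards [h1] with n ⟨h1, h2⟩
    have h3 : x (k n) < q * τ n := by
      have := (hk n h2).1
      calc x (k n) = q * (q⁻¹ * x (k n)) := by field_simp
        _ < q * τ n := by exact mul_lt_mul_of_pos_left this hq0
    exact hxa.lt_iff_gt.mp (lt_trans h3 h1)
  have hkatTop : Tendsto k atTop atTop :=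
    tendsto_atTop.mpr fun M => by filter_upwards [klarge M] with n h; omega
  -- the eventual threshold
  have hev : ∀ᶠ n in atTop, τ n < t ∧ q * q * τ n < t ∧ q * q * τ n < τ 0 ∧ K₁ + 1 < k n := by
    have h0 : Tendsto (fun n => q * q * τ n) atTop (nhds 0) := by
      simpa using hτ0.const_mul (q * q)
    have e1 := hτ0.eventually (eventually_lt_nhds ht)
    have e2 := h0.eventually (eventually_lt_nhds ht)
    have e3 := h0.eventually (eventually_lt_nhds (hτpos 0))
    filter_upwards [e1, e2, e3, klarge (K₁ + 1)] with n h1 h2 h3 h4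
    exact ⟨h1, h2, h3, h4⟩
  obtain ⟨N₀, hN₀⟩ := eventually_atTop.mp hev
  set a : ℕ → ℝ := fun n => sSup (E ∩ Set.Ioc 0 (q * x (k n))) with ha
  set b : ℕ → ℝ := fun n => sInf (E ∩ Set.Ioi (a n)) with hb
  set M : ℕ → ℝ := fun n => min t (q⁻¹ * x (k n - 1)) with hM
  -- per-index facts
  have hSne : ∀ n, N₀ ≤ n → τ n ∈ E ∩ Set.Ioc 0 (q * x (k n)) := by
    intro n hn
    exact ⟨(hmem n).1, hτpos n, le_of_lt (hk n (hN₀ n hn).1).2⟩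
  have hSbdd : ∀ n, BddAbove (E ∩ Set.Ioc 0 (q * x (k n))) :=
    fun n => ⟨q * x (k n), fun e he => he.2.2⟩
  have haτ : ∀ n, N₀ ≤ n → τ n ≤ a n := fun n hn => le_csSup (hSbdd n) (hSne n hn)
  have hapos : ∀ n, N₀ ≤ n → 0 < a n := fun n hn => lt_of_lt_of_le (hτpos n) (haτ n hn)
  have haub : ∀ n, a n ≤ q * x (k n) := by
    intro n
    rcases (E ∩ Set.Ioc 0 (q * x (k n))).eq_empty_or_nonempty with h | h
    · simp only [ha, h, Real.sSup_empty]
      exact (mul_pos hq0 (hxp _)).le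
    · exact csSup_le h fun e he => he.2.2
  have hxkq : ∀ n, N₀ ≤ n → x (k n) < q * τ n := by
    intro n hn
    have := (hk n (hN₀ n hn).1).1
    calc x (k n) = q * (q⁻¹ * x (k n)) := by field_simp
      _ < q * τ n := mul_lt_mul_of_pos_left this hq0
  have ha2 : ∀ n, N₀ ≤ n → a n < q * q * τ n := by
    intro n hn
    calc a n ≤ q * x (k n) := haub n
      _ < q * (q * τ n) := mul_lt_mul_of_pos_left (hxkq n hn) hq0
      _ = q * q * τ n := by ring
  have hratio : ∀ n, N₀ ≤ n → x (k n) < q⁻¹ * q⁻¹ * x (k n - 1) := by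
    intro n hn
    have h4 := (hN₀ n hn).2.2.2
    have : x (k n - 1 + 1) < q⁻¹ * q⁻¹ * x (k n - 1) := hK₁' _ (by omega)
    rwa [show k n - 1 + 1 = k n by omega] at this
  have hMgap : ∀ n, N₀ ≤ n → ∀ e ∈ E, a n < e → e < M n → False := by
    intro n hn e he h1 h2
    have hepos : 0 < e := lt_trans (hapos n hn) h1
    rcases le_or_gt e (q * x (k n)) with hle | hle
    · have : e ≤ a n := le_csSup (hSbdd n) ⟨he, hepos, hle⟩
      linarith
    · have het : e < t := lt_of_lt_of_le h2 (min_le_left _ _)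
      obtain ⟨m, hm1, hm2⟩ := cover e he hepos het
      rcases le_or_gt (k n) m with h3 | h3
      · have : x m ≤ x (k n) := hxa.antitone h3
        nlinarith
      · have h4 : m ≤ k n - 1 := by omega
        have : x (k n - 1) ≤ x m := hxa.antitone h4
        have h5 : e < q⁻¹ * x (k n - 1) := lt_of_lt_of_le h2 (min_le_right _ _)
        nlinarith
  have hMq : ∀ n, N₀ ≤ n → q * x (k n) < M n := by
    intro n hn
    refine lt_min ?_ ?_
    · have := hxkq n hn
      have h2 := (hN₀ n hn).2.1
      nlinarith
    · have := hratio n hn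
      have hx1 : 0 < x (k n - 1) := hxp _
      calc q * x (k n) < q * (q⁻¹ * q⁻¹ * x (k n - 1)) := mul_lt_mul_of_pos_left this hq0
        _ = q⁻¹ * x (k n - 1) := by field_simp
  have hTne : ∀ n, N₀ ≤ n → (E ∩ Set.Ioi (a n)).Nonempty := by
    intro n hn
    refine ⟨τ 0, (hmem 0).1, ?_⟩
    have := ha2 n hn
    have := (hN₀ n hn).2.2.1
    simp only [Set.mem_Ioi]; linarith
  have hTbdd : ∀ n, BddBelow (E ∩ Set.Ioi (a n)) :=
    fun n => ⟨a n, fun e he => le_of_lt he.2⟩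
  have hbM : ∀ n, N₀ ≤ n → M n ≤ b n := by
    intro n hn
    refine le_csInf (hTne n hn) fun e he => ?_
    by_contra hcon
    push_neg at hcon
    exact hMgap n hn e he.1 he.2 hcon
  have hab : ∀ n, N₀ ≤ n → a n < b n := fun n hn =>
    lt_of_le_of_lt (haub n) (lt_of_lt_of_le (hMq n hn) (hbM n hn))
  have hIoo : ∀ n, N₀ ≤ n → Set.Ioo (a n) (b n) ∩ E = ∅ := by
    intro n hn
    rw [Set.eq_empty_iff_forall_notMem]
    rintro e ⟨⟨h1, h2⟩, he⟩
    exact absurd (csInf_le (hTbdd n) ⟨he, h1⟩) (not_le.mpr h2)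
  have hmax : ∀ n, N₀ ≤ n → ∀ c d : ℝ, 0 ≤ c → Set.Ioo (a n) (b n) ⊆ Set.Ioo c d →
      (c, d) ≠ (a n, b n) → Set.Ioo c d ∩ E ≠ ∅ := by
    intro n hn c d _ hsub hne
    rw [← Set.nonempty_iff_ne_empty]
    have hcd := (Set.Ioo_subset_Ioo_iff (hab n hn)).mp hsub
    rcases eq_or_lt_of_le hcd.1 with h1 | h1
    · have hd : b n < d := by
        refine lt_of_le_of_ne hcd.2 fun h => hne ?_
        rw [← h1, ← h]
      obtain ⟨e, he, hed⟩ := exists_lt_of_csInf_lt (hTne n hn) hd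
      exact ⟨e, ⟨by rw [h1]; exact he.2, hed⟩, he.1⟩
    · obtain ⟨e, he, hce⟩ := exists_lt_of_lt_csSup ⟨τ n, hSne n hn⟩ h1
      refine ⟨e, ⟨hce, ?_⟩, he.1⟩
      calc e ≤ a n := le_csSup (hSbdd n) he
        _ < b n := hab n hn
        _ ≤ d := hcd.2
  -- the index shift
  set m : ℕ → ℕ := fun n => max n N₀ with hmdef
  have hmge : ∀ n, N₀ ≤ m n := fun n => le_max_right n N₀
  have hmat : Tendsto m atTop atTop := tendsto_atTop_mono (fun n => le_max_left n N₀) tendsto_id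
  have hmev : ∀ᶠ n in atTop, m n = n := by
    filter_upwards [eventually_ge_atTop N₀] with n hn
    exact max_eq_left hn
  refine ⟨fun n => (a (m n), b (m n)), ⟨?_, ?_, ?_, ?_⟩, ?_⟩
  · exact fun n => hapos (m n) (hmge n)
  · intro n
    exact ⟨le_of_lt (hapos (m n) (hmge n)), hab (m n) (hmge n), hIoo (m n) (hmge n),
      hmax (m n) (hmge n)⟩
  · -- a (m n) → 0
    have hup : Tendsto (fun n => q * q * τ (m n)) atTop (nhds 0) := by
      have := (hτ0.comp hmat).const_mul (q * q)
      simpa using this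
    refine tendsto_of_tendsto_of_tendsto_of_le_of_le' tendsto_const_nhds hup ?_ ?_
    · filter_upwards with n
      exact le_of_lt (hapos (m n) (hmge n))
    · filter_upwards with n
      exact le_of_lt (ha2 (m n) (hmge n))
  · -- (b - a) / b → 1
    have hbpos : ∀ n, 0 < b (m n) := fun n =>
      lt_trans (hapos (m n) (hmge n)) (hab (m n) (hmge n))
    have habquot : Tendsto (fun n => a (m n) / b (m n)) atTop (nhds 0) := by
      -- upper bound function
      have hxk0 : Tendsto (fun n => x (k (m n))) atTop (nhds 0) := by
        refine tendsto_of_tendsto_of_tendsto_of_le_of_le' tendsto_const_nhds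
          (by simpa using (hτ0.comp hmat).const_mul q) ?_ ?_
        · filter_upwards with n; exact le_of_lt (hxp _)
        · filter_upwards with n; exact le_of_lt (hxkq (m n) (hmge n))
      have hrat0 : Tendsto (fun n => x (k (m n)) / x (k (m n) - 1)) atTop (nhds 0) := by
        have hg : Tendsto (fun j => x j / x (j - 1)) atTop (nhds 0) := by
          have : Tendsto (fun j => x (j + 1) / x (j + 1 - 1)) atTop (nhds 0) := by
            simpa using hxr
          exact (tendsto_add_atTop_iff_nat 1).mp this
        exact hg.comp (hkatTop.comp hmat)
      have hsum : Tendsto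
          (fun n => q / t * x (k (m n)) + q * q * (x (k (m n)) / x (k (m n) - 1)))
          atTop (nhds 0) := by
        have h1 := hxk0.const_mul (q / t)
        have h2 := hrat0.const_mul (q * q)
        simpa using h1.add h2
      refine tendsto_of_tendsto_of_tendsto_of_le_of_le' tendsto_const_nhds hsum ?_ ?_
      · filter_upwards with n
        exact div_nonneg (le_of_lt (hapos (m n) (hmge n))) (le_of_lt (hbpos n))
      · filter_upwards with n
        have hn : N₀ ≤ m n := hmge n
        have hMpos : 0 < M (m n) := lt_trans (mul_pos hq0 (hxp _)) (hMq (m n) hn)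
        have h1 : a (m n) / b (m n) ≤ q * x (k (m n)) / M (m n) :=
          div_le_div₀ (mul_pos hq0 (hxp _)).le (haub (m n)) hMpos (hbM (m n) hn)
        have hx1 : 0 < x (k (m n)) := hxp _
        have hx2 : 0 < x (k (m n) - 1) := hxp _
        have h2 : q * x (k (m n)) / M (m n) ≤
            q / t * x (k (m n)) + q * q * (x (k (m n)) / x (k (m n) - 1)) := by
          rcases min_choice t (q⁻¹ * x (k (m n) - 1)) with hmin | hmin
          · have hMt : M (m n) = t := by simp only [hM]; exact hmin
            rw [hMt]
            have he1 : q * x (k (m n)) / t = q / t * x (k (m n)) := by ring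
            rw [he1]
            have : 0 ≤ q * q * (x (k (m n)) / x (k (m n) - 1)) := by positivity
            linarith
          · have hMt : M (m n) = q⁻¹ * x (k (m n) - 1) := by simp only [hM]; exact hmin
            rw [hMt]
            have he1 : q * x (k (m n)) / (q⁻¹ * x (k (m n) - 1)) =
                q * q * (x (k (m n)) / x (k (m n) - 1)) := by
              field_simp
            rw [he1]
            have : 0 ≤ q / t * x (k (m n)) := by positivity
            linarith
        exact le_trans h1 h2
    have hfe : (fun n => (b (m n) - a (m n)) / b (m n)) =
        fun n => 1 - a (m n) / b (m n) := by
      funext n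
      have h0 := hbpos n
      field_simp
    show Tendsto (fun n => (b (m n) - a (m n)) / b (m n)) atTop (nhds 1)
    rw [hfe]
    simpa using tendsto_const_nhds.sub habquot
  · -- SeqEquiv
    refine ⟨q⁻¹ * q⁻¹, 1, by positivity, one_pos, ?_⟩
    filter_upwards [hmev] with n hn
    rw [hn]
    have hn' : N₀ ≤ n := le_trans (hmge n) (le_of_eq hn)
    have h2 := ha2 n hn'
    constructor
    · have hq2 : q⁻¹ * q⁻¹ * (q * q * τ n) = τ n := by field_simp
      calc q⁻¹ * q⁻¹ * a n ≤ q⁻¹ * q⁻¹ * (q * q * τ n) :=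
            mul_le_mul_of_nonneg_left (le_of_lt h2) (by positivity)
        _ = τ n := hq2
    · simpa using haτ n hn'

end Bwd
section FwdEasy

lemma rhs_of_notAcc {E : Set ℝ} (h : ¬ AccZero E) :
    ∃ q : ℝ, 1 < q ∧ ∃ x : ℕ → ℝ, StrictAnti x ∧ (∀ n, 0 < x n) ∧
      Tendsto (fun n => x (n + 1) / x n) atTop (nhds 0) ∧
      ∃ t : ℝ, 0 < t ∧
        E ∩ Set.Ioo 0 t ⊆ (⋃ n : ℕ, Set.Ioo (q⁻¹ * x n) (q * x n)) ∩ Set.Ioo 0 t := by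
  simp only [AccZero] at h
  push_neg at h
  obtain ⟨ε, hε, hh⟩ := h
  refine ⟨2, one_lt_two, fun n => (2:ℝ)⁻¹ ^ (n * n), ?_, ?_, ?_, ε, hε, ?_⟩
  · intro m n hmn
    exact pow_lt_pow_right_of_lt_one₀ (by norm_num) (by norm_num)
      (Nat.mul_self_lt_mul_self hmn)
  · intro n; positivity
  · have hfe : (fun n : ℕ => ((2:ℝ)⁻¹ ^ ((n+1) * (n+1))) / ((2:ℝ)⁻¹ ^ (n * n))) =
        fun n : ℕ => (2:ℝ)⁻¹ ^ (2 * n + 1) := by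
      funext n
      have h1 : (n + 1) * (n + 1) = n * n + (2 * n + 1) := by ring
      rw [h1, pow_add]
      rw [mul_div_assoc]
      have h2 : ((2:ℝ)⁻¹ ^ (n*n)) ≠ 0 := by positivity
      field_simp
    rw [hfe]
    refine tendsto_of_tendsto_of_tendsto_of_le_of_le' tendsto_const_nhds
      (tendsto_pow_atTop_nhds_zero_of_lt_one (by norm_num : (0:ℝ) ≤ 2⁻¹) (by norm_num)) ?_ ?_
    · filter_upwards with n; positivity
    · filter_upwards with n
      exact pow_le_pow_of_le_one (by norm_num) (by norm_num) (by omega)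
  · rintro e ⟨heE, he0, heε⟩
    exact absurd (hh e heE he0) (not_le.mpr heε)

lemma greedy {E : Set ℝ} (acc : AccZero E) :
    ∃ y : ℕ → ℝ, (∀ n, y n ∈ E) ∧ (∀ n, 0 < y n) ∧ (∀ n, y (n + 1) < y n / 2) ∧
      (∀ n, ∀ e ∈ E, 0 < e → e < y n / 2 → e < 2 * y (n + 1)) ∧
      Tendsto y atTop (nhds 0) := by
  have step : ∀ v : ℝ, 0 < v → ∃ w, w ∈ E ∧ 0 < w ∧ w < v / 2 ∧
      ∀ e ∈ E, 0 < e → e < v / 2 → e < 2 * w := by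
    intro v hv
    have hne : (E ∩ Set.Ioo 0 (v / 2)).Nonempty := by
      obtain ⟨e, he, h1, h2⟩ := acc (v / 2) (by linarith)
      exact ⟨e, he, h1, h2⟩
    have hbdd : BddAbove (E ∩ Set.Ioo 0 (v / 2)) :=
      ⟨v / 2, fun e he => le_of_lt he.2.2⟩
    obtain ⟨e₀, he₀⟩ := id hne
    have hspos : 0 < sSup (E ∩ Set.Ioo 0 (v / 2)) :=
      lt_of_lt_of_le he₀.2.1 (le_csSup hbdd he₀)
    obtain ⟨w, hwS, hw⟩ := exists_lt_of_lt_csSup hne (half_lt_self hspos)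
    refine ⟨w, hwS.1, hwS.2.1, hwS.2.2, ?_⟩
    intro e he h0 h2
    have h3 : e ≤ sSup (E ∩ Set.Ioo 0 (v / 2)) := le_csSup hbdd ⟨he, h0, h2⟩
    linarith
  obtain ⟨y₀, hy₀E, hy₀p, _⟩ := acc 1 one_pos
  classical
  set F : ℝ → ℝ := fun v => if h : 0 < v then Classical.choose (step v h) else 1 with hF
  have hFspec : ∀ v (h : 0 < v), F v ∈ E ∧ 0 < F v ∧ F v < v / 2 ∧
      ∀ e ∈ E, 0 < e → e < v / 2 → e < 2 * F v := by
    intro v h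
    simp only [hF, dif_pos h]
    exact Classical.choose_spec (step v h)
  set y : ℕ → ℝ := fun n => Nat.rec y₀ (fun _ prev => F prev) n with hy
  have hyrec : ∀ n, y (n + 1) = F (y n) := fun n => rfl
  have hinv : ∀ n, y n ∈ E ∧ 0 < y n := by
    intro n
    induction n with
    | zero => exact ⟨hy₀E, hy₀p⟩
    | succ m ih =>
        have := hFspec (y m) ih.2
        rw [hyrec]
        exact ⟨this.1, this.2.1⟩
  have hhalf : ∀ n, y (n + 1) < y n / 2 := by
    intro n
    rw [hyrec]
    exact (hFspec (y n) (hinv n).2).2.2.1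
  refine ⟨y, fun n => (hinv n).1, fun n => (hinv n).2, hhalf, ?_, ?_⟩
  · intro n e he h0 h2
    rw [hyrec]
    exact (hFspec (y n) (hinv n).2).2.2.2 e he h0 h2
  · have hle : ∀ n, y n ≤ y 0 * (2:ℝ)⁻¹ ^ n := by
      intro n
      induction n with
      | zero => simp
      | succ m ih =>
          have h1 := hhalf m
          have h2 : (0:ℝ) < 2⁻¹ ^ m := by positivity
          calc y (m + 1) ≤ y m / 2 := le_of_lt h1
            _ ≤ (y 0 * 2⁻¹ ^ m) / 2 := by linarith
            _ = y 0 * 2⁻¹ ^ (m + 1) := by rw [pow_succ]; ring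
    have h2 : Tendsto (fun n : ℕ => y 0 * (2:ℝ)⁻¹ ^ n) atTop (nhds 0) := by
      simpa using (tendsto_pow_atTop_nhds_zero_of_lt_one (by norm_num : (0:ℝ) ≤ 2⁻¹)
        (by norm_num)).const_mul (y 0)
    refine tendsto_of_tendsto_of_tendsto_of_le_of_le' tendsto_const_nhds h2 ?_ ?_
    · filter_upwards with n; exact le_of_lt (hinv n).2
    · filter_upwards with n; exact hle n

end FwdEasy
set_option maxHeartbeats 2000000
section Fwd

lemma fwdDir {E : Set ℝ} (hE : E ⊆ Set.Ici 0) (acc : AccZero E) (hcsp : CSP E) :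
    ∃ q : ℝ, 1 < q ∧ ∃ x : ℕ → ℝ, StrictAnti x ∧ (∀ n, 0 < x n) ∧
      Tendsto (fun n => x (n + 1) / x n) atTop (nhds 0) ∧
      ∃ t : ℝ, 0 < t ∧
        E ∩ Set.Ioo 0 t ⊆ (⋃ n : ℕ, Set.Ioo (q⁻¹ * x n) (q * x n)) ∩ Set.Ioo 0 t := by
  classical
  obtain ⟨y, hyE, hyp, hyhalf, hygr, hy0⟩ := greedy acc
  have hya : StrictAnti y :=
    strictAnti_nat_of_succ_lt fun n => by have := hyhalf n; have := hyp n; linarith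
  have hymem : memE0d E y :=
    ⟨Filter.Eventually.of_forall fun n => by have := hyhalf n; have := hyp n; linarith,
     hy0, fun n => ⟨hyE n, fun h => (ne_of_gt (hyp n)) (by simpa using h)⟩⟩
  obtain ⟨A₁, hA₁, hseq₁⟩ := hcsp y hymem
  obtain ⟨c₁, c₂, hc₁, hc₁le, hc₂, hev₁⟩ := seqEquiv_adjust hseq₁ hA₁.1
  set a : ℕ → ℝ := fun n => (A₁ n).1 with hadef
  have hapos : ∀ n, 0 < a n := hA₁.1
  have hc₂pos : (0:ℝ) < c₂ := lt_of_lt_of_le one_pos hc₂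
  have hc₁lt1 : c₁ < 1 := lt_of_le_of_lt hc₁le (by norm_num)
  have hyle : ∀ᶠ n in atTop, y n ≤ a n := by
    filter_upwards [hev₁, big_gap hA₁ hc₂pos] with n hn hgap
    have hIoo := (hA₁.2.1 n).2.2.1
    by_contra hcon
    push_neg at hcon
    have hyb : y n < (A₁ n).2 := lt_of_le_of_lt hn.2 hgap
    have : y n ∈ Set.Ioo (a n) ((A₁ n).2) ∩ E := ⟨⟨hcon, hyb⟩, hyE n⟩
    rw [hIoo] at this
    exact this
  obtain ⟨N₁, hN₁⟩ := eventually_atTop.mp (hev₁.and hyle)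
  -- stage 1 selection
  have hex1 : ∀ j, ∃ n, j < n ∧ a n < c₁ * a j := by
    intro j
    have h1 : ∀ᶠ n in atTop, a n < c₁ * a j :=
      hA₁.2.2.1.eventually (eventually_lt_nhds (mul_pos hc₁ (hapos j)))
    exact ((eventually_gt_atTop j).and h1).exists
  obtain ⟨u, hu0, huS, hubr⟩ := chainRec (fun j n => a n < c₁ * a j) N₁ hex1
  have huN : ∀ k, N₁ ≤ u k := by
    intro k
    induction k with
    | zero => exact le_of_eq hu0.symm
    | succ m ih => exact le_trans ih (le_of_lt (huS m).1)
  have humono : StrictMono u := strictMono_nat_of_lt_succ fun k => (huS k).1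
  set x1 : ℕ → ℝ := fun k => a (u k) with hx1def
  have hx1pos : ∀ k, 0 < x1 k := fun k => hapos (u k)
  have hx1step : ∀ k, x1 (k + 1) < c₁ * x1 k := fun k => (huS k).2.1
  have hx1anti : StrictAnti x1 := strictAnti_nat_of_succ_lt fun k => by
    have h1 := hx1step k
    nlinarith [hx1pos k]
  have hyx1 : ∀ k, c₁ * x1 k ≤ y (u k) ∧ y (u k) ≤ x1 k :=
    fun k => ⟨((hN₁ (u k) (huN k)).1).1, (hN₁ (u k) (huN k)).2⟩
  -- stage-0 covering with q₀ = 4 / c₁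
  set q₀ : ℝ := 4 / c₁ with hq₀def
  have hq₀pos : 0 < q₀ := div_pos (by norm_num) hc₁
  have hq₀inv : q₀⁻¹ = c₁ / 4 := by rw [hq₀def, inv_div]
  have hq₀2 : (2:ℝ) ≤ q₀ := by
    rw [hq₀def, le_div_iff₀ hc₁]; linarith
  have cover0 : ∀ e ∈ E, 0 < e → e < y N₁ →
      ∃ m, N₁ ≤ m ∧ q₀⁻¹ * a m < e ∧ e < q₀ * a m := by
    intro e heE he0 hey
    have hPex : ∃ j, y (N₁ + j + 1) < e := by
      obtain ⟨m₀, hm₀⟩ := (hy0.eventually (eventually_lt_nhds he0)).exists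
      exact ⟨m₀, lt_of_le_of_lt (hya.antitone (by omega)) hm₀⟩
    set j := Nat.find hPex with hjdef
    set m := N₁ + j with hmdef
    have hm1 : y (m + 1) < e := Nat.find_spec hPex
    have hm2 : e ≤ y m := by
      rcases Nat.eq_zero_or_pos j with h | h
      · rw [hmdef, h]
        simpa using le_of_lt hey
      · have := Nat.find_min hPex (show j - 1 < j by omega)
        push_neg at this
        have heq : N₁ + (j - 1) + 1 = m := by omega
        rwa [heq] at this
    have hmN : N₁ ≤ m := by omega
    have ham : c₁ * a m ≤ y m ∧ y m ≤ a m := ⟨(hN₁ m hmN).1.1, (hN₁ m hmN).2⟩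
    have ham1 : c₁ * a (m + 1) ≤ y (m + 1) ∧ y (m + 1) ≤ a (m + 1) :=
      ⟨(hN₁ (m + 1) (by omega)).1.1, (hN₁ (m + 1) (by omega)).2⟩
    rcases lt_or_ge e (y m / 2) with hcase | hcase
    · -- use index m + 1
      have hgr := hygr m e heE he0 hcase
      refine ⟨m + 1, by omega, ?_, ?_⟩
      · rw [hq₀inv]
        linarith [ham1.1, hm1, hyp (m + 1)]
      · have h8 : 2 * a (m + 1) ≤ q₀ * a (m + 1) :=
          mul_le_mul_of_nonneg_right hq₀2 (hapos (m + 1)).le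
        linarith [ham1.2, h8]
    · -- use index m
      refine ⟨m, hmN, ?_, ?_⟩
      · rw [hq₀inv]
        linarith [ham.1, hyp m]
      · have h9 : 1 * a m < q₀ * a m :=
          mul_lt_mul_of_pos_right (by linarith) (hapos m)
        linarith [ham.2]
  -- stage-1 covering with Q = 4 / (c₁ * c₁)
  set Q : ℝ := 4 / (c₁ * c₁) with hQdef
  have hc₁₁ : (0:ℝ) < c₁ * c₁ := mul_pos hc₁ hc₁
  have hQpos : 0 < Q := div_pos (by norm_num) hc₁₁
  have hQinv : Q⁻¹ = c₁ * c₁ / 4 := by rw [hQdef, inv_div]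
  have hQ1 : 1 < Q := by
    rw [hQdef, lt_div_iff₀ hc₁₁]
    nlinarith
  have hq₀Q : q₀ ≤ Q := by
    rw [hq₀def, hQdef, div_le_div_iff₀ hc₁ hc₁₁]
    nlinarith
  have cover1 : ∀ e ∈ E, 0 < e → e < y N₁ →
      ∃ k, Q⁻¹ * x1 k < e ∧ e < Q * x1 k := by
    intro e heE he0 hey
    obtain ⟨m, hmN, hm1, hm2⟩ := cover0 e heE he0 hey
    obtain ⟨k, hk1, hk2⟩ := hubr m hmN
    rcases eq_or_lt_of_le hk1 with heq | hlt
    · have hax : a m = x1 k := by rw [hx1def, ← heq]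
      refine ⟨k, ?_, ?_⟩
      · rw [hQinv]
        rw [hq₀inv, hax] at hm1
        nlinarith [hx1pos k, hm1]
      · rw [hax] at hm2
        have := mul_le_mul_of_nonneg_right hq₀Q (hx1pos k).le
        linarith
    · have hclose := (huS k).2.2 m hlt hk2
      push_neg at hclose
      -- hclose : c₁ * a (u k) ≤ a m
      have h1 : a m ≤ y m / c₁ := by
        rw [le_div_iff₀ hc₁]
        have := (hN₁ m hmN).1.1
        linarith
      have h2 : y m ≤ y (u k + 1) := hya.antitone (by omega)
      have h3 : y (u k + 1) < y (u k) / 2 := hyhalf (u k)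
      have h4 : y (u k) ≤ x1 k := (hyx1 k).2
      have h5 : a m ≤ x1 k / (2 * c₁) := by
        rw [le_div_iff₀ (by linarith : (0:ℝ) < 2 * c₁)]
        rw [le_div_iff₀ hc₁] at h1
        nlinarith
      refine ⟨k, ?_, ?_⟩
      · have h6 : c₁ / 4 * (c₁ * x1 k) ≤ c₁ / 4 * a m :=
          mul_le_mul_of_nonneg_left hclose (by linarith)
        rw [hQinv]
        rw [hq₀inv] at hm1
        linarith
      · have h6 : q₀ * a m ≤ q₀ * (x1 k / (2 * c₁)) :=
          mul_le_mul_of_nonneg_left h5 hq₀pos.le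
        have h7 : q₀ * (x1 k / (2 * c₁)) ≤ Q * x1 k := by
          rw [hq₀def, hQdef, div_mul_div_comm, div_mul_eq_mul_div,
            div_le_div_iff₀ (by nlinarith) hc₁₁]
          nlinarith [hx1pos k]
        linarith
  -- second application of CSP
  have hτ2mem : memE0d E (fun k => y (u k)) := by
    refine ⟨Filter.Eventually.of_forall fun k => ?_, hy0.comp humono.tendsto_atTop,
      fun k => ⟨hyE (u k), fun h => (ne_of_gt (hyp (u k))) (by simpa using h)⟩⟩
    exact le_of_lt (hya (huS k).1)
  obtain ⟨A₂, hA₂, hseq₂⟩ := hcsp _ hτ2mem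
  obtain ⟨c₁', c₂', hc₁', hc₁'le, hc₂', hev₂⟩ := seqEquiv_adjust hseq₂ hA₂.1
  have hc₂'pos : (0:ℝ) < c₂' := lt_of_lt_of_le one_pos hc₂'
  set α : ℕ → ℝ := fun k => (A₂ k).1 with hαdef
  set β : ℕ → ℝ := fun k => (A₂ k).2 with hβdef
  have hαpos : ∀ k, 0 < α k := hA₂.1
  have hβpos : ∀ k, 0 < β k := fun k => memIE_b_pos hA₂ k
  set K : ℝ := (c₁ * c₁')⁻¹ with hKdef
  have hcc' : (0:ℝ) < c₁ * c₁' := mul_pos hc₁ hc₁'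
  have hKpos : 0 < K := inv_pos.mpr hcc'
  have hKc : K * (c₁ * c₁') = 1 := inv_mul_cancel₀ (ne_of_gt hcc')
  have hK1 : 1 < K := by
    rw [hKdef]
    apply (one_lt_inv₀ hcc').mpr
    nlinarith
  set ρ : ℕ → ℝ := fun k => c₂' / c₁ * (α k / β k) with hρdef
  have hρpos : ∀ k, 0 < ρ k := fun k =>
    mul_pos (div_pos hc₂'pos hc₁) (div_pos (hαpos k) (hβpos k))
  have hρ0 : Tendsto ρ atTop (nhds 0) := by
    have h1 : (fun k => α k / β k) = fun k => 1 - (β k - α k) / β k := by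
      funext k
      have := (hβpos k).ne'
      field_simp; ring
    have h2 : Tendsto (fun k => α k / β k) atTop (nhds 0) := by
      rw [h1]
      have h3 : Tendsto (fun k : ℕ => (1:ℝ)) atTop (nhds 1) := tendsto_const_nhds
      simpa using h3.sub hA₂.2.2.2
    simpa using h2.const_mul (c₂' / c₁)
  obtain ⟨K₀, hK₀⟩ := eventually_atTop.mp
    (hev₂.and (big_gap hA₂ (show (0:ℝ) < K * c₂' / c₁ from
      div_pos (mul_pos hKpos hc₂'pos) hc₁)))
  -- dichotomy
  have hdich : ∀ j k, K₀ ≤ k → x1 j ≤ α k / c₁ ∨ β k ≤ x1 j := by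
    intro j k hk
    have hIoo := (hA₂.2.1 k).2.2.1
    have hyj : y (u j) ∉ Set.Ioo (α k) (β k) := by
      intro hmem
      have : y (u j) ∈ Set.Ioo (α k) (β k) ∩ E := ⟨hmem, hyE (u j)⟩
      rw [hIoo] at this
      exact this
    rcases le_or_gt (y (u j)) (α k) with h | h
    · left
      have := (hyx1 j).1
      rw [le_div_iff₀ hc₁]
      linarith
    · right
      have hβ : β k ≤ y (u j) := by
        by_contra hcon
        push_neg at hcon
        exact hyj ⟨h, hcon⟩
      exact le_trans hβ (hyx1 j).2
  -- geometric decay of x1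
  have hgeo : ∀ j d, x1 (j + d) ≤ c₁ ^ d * x1 j := by
    intro j d
    induction d with
    | zero => simp
    | succ m ih =>
        have h1 := hx1step (j + m)
        calc x1 (j + (m + 1)) = x1 ((j + m) + 1) := by ring_nf
          _ ≤ c₁ * x1 (j + m) := le_of_lt h1
          _ ≤ c₁ * (c₁ ^ m * x1 j) := mul_le_mul_of_nonneg_left ih (le_of_lt hc₁)
          _ = c₁ ^ (m + 1) * x1 j := by rw [pow_succ]; ring
  -- choose J'
  obtain ⟨J', hJ'⟩ : ∃ J', c₁ ^ (J' + 1) < c₁ * c₁' := by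
    obtain ⟨n₁, hn₁⟩ := ((tendsto_pow_atTop_nhds_zero_of_lt_one (le_of_lt hc₁)
      hc₁lt1).eventually (eventually_lt_nhds hcc')).exists
    exact ⟨n₁, lt_of_le_of_lt (pow_le_pow_of_le_one (le_of_lt hc₁) (le_of_lt hc₁lt1)
      (by omega)) hn₁⟩
  -- run-length bound
  have hrun : ∀ k j, K₀ ≤ k → j < k →
      (∀ m, j < m → m ≤ k → x1 (m - 1) ≤ K * x1 m) → k - j ≤ J' := by
    intro k j hkK hjk hcl
    have hk := hK₀ k hkK
    have hgap : K * c₂' / c₁ * α k < β k := hk.2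
    have hxα : x1 k ≤ c₂' * α k / c₁ := by
      rw [le_div_iff₀ hc₁]
      have h1 := (hyx1 k).1
      have h2 := hk.1.2
      nlinarith
    have hαx : c₁' * α k ≤ x1 k := le_trans hk.1.1 (hyx1 k).2
    have hdown : ∀ d, d ≤ k - 1 - j → x1 (k - 1 - d) ≤ α k / c₁ := by
      intro d
      induction d with
      | zero =>
          intro _
          simp only [Nat.sub_zero]
          rcases hdich (k - 1) k hkK with h | h
          · exact h
          · exfalso
            have h1 : x1 (k - 1) ≤ K * x1 k := hcl k hjk (le_refl k)
            have h2 : K * x1 k ≤ K * (c₂' * α k / c₁) :=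
              mul_le_mul_of_nonneg_left hxα (le_of_lt hKpos)
            have h3 : K * (c₂' * α k / c₁) = K * c₂' / c₁ * α k := by ring
            linarith
      | succ d ih =>
          intro hd
          have ihd := ih (by omega)
          have hmj : j < k - 1 - d := by omega
          have hmk : k - 1 - d ≤ k := by omega
          have h1 : x1 (k - 1 - d - 1) ≤ K * x1 (k - 1 - d) := hcl _ hmj hmk
          have h2 : x1 (k - 1 - d - 1) ≤ K * (α k / c₁) := le_trans h1
            (mul_le_mul_of_nonneg_left ihd (le_of_lt hKpos))
          have hmeq : k - 1 - (d + 1) = k - 1 - d - 1 := by omega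
          rw [hmeq]
          rcases hdich (k - 1 - d - 1) k hkK with h | h
          · exact h
          · exfalso
            have h4 : K * (α k / c₁) ≤ K * c₂' / c₁ * α k := by
              have h5 : K * (α k / c₁) = K / c₁ * α k := by ring
              rw [h5]
              apply mul_le_mul_of_nonneg_right _ (le_of_lt (hαpos k))
              rw [div_le_div_iff₀ hc₁ hc₁]
              nlinarith [mul_pos hKpos hc₁]
            linarith
    have hxj : x1 j ≤ α k / c₁ := by
      have h0 := hdown (k - 1 - j) (le_refl _)
      have heq : k - 1 - (k - 1 - j) = j := by omega
      rwa [heq] at h0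
    by_contra hcon
    push_neg at hcon
    have hd1 : J' + 1 ≤ k - j := hcon
    have hgeo1 : x1 k ≤ c₁ ^ (k - j) * x1 j := by
      have h0 := hgeo j (k - j)
      rwa [show j + (k - j) = k by omega] at h0
    have hpow : c₁ ^ (k - j) ≤ c₁ ^ (J' + 1) :=
      pow_le_pow_of_le_one (le_of_lt hc₁) (le_of_lt hc₁lt1) hd1
    have h5 : c₁' * α k ≤ c₁ ^ (J' + 1) * (α k / c₁) := by
      calc c₁' * α k ≤ x1 k := hαx
        _ ≤ c₁ ^ (k - j) * x1 j := hgeo1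
        _ ≤ c₁ ^ (k - j) * (α k / c₁) :=
            mul_le_mul_of_nonneg_left hxj (pow_nonneg hc₁.le _)
        _ ≤ c₁ ^ (J' + 1) * (α k / c₁) :=
            mul_le_mul_of_nonneg_right hpow (div_pos (hαpos k) hc₁).le
    have h6 : c₁ ^ (J' + 1) * (α k / c₁) < c₁ * c₁' * (α k / c₁) :=
      mul_lt_mul_of_pos_right hJ' (div_pos (hαpos k) hc₁)
    have h7 : c₁ * c₁' * (α k / c₁) = c₁' * α k := by
      field_simp
    linarith
  -- good steps exist beyond any point
  have hgoodex : ∀ n : ℕ, ∃ m, n < m ∧ (K₀ + 1 ≤ m ∧ K * x1 m < x1 (m - 1)) := by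
    intro n
    by_contra hcon
    push_neg at hcon
    have h0 := hrun (max n K₀ + J' + 1) (max n K₀) (by omega) (by omega)
      (fun m h1 h2 => hcon m (by omega) (by omega))
    omega
  obtain ⟨g, hg0, hgS, hgbr⟩ := chainRec (fun _ m => K₀ + 1 ≤ m ∧ K * x1 m < x1 (m - 1)) 0
    (fun j => hgoodex j)
  have hgmono : StrictMono g := strictMono_nat_of_lt_succ fun k => (hgS k).1
  have hgood : ∀ i, K₀ + 1 ≤ g (i + 1) ∧ K * x1 (g (i + 1)) < x1 (g (i + 1) - 1) :=
    fun i => (hgS i).2.1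
  -- good-step ratio bound
  have hgoodstep : ∀ k, K₀ ≤ k → K * x1 k < x1 (k - 1) → x1 k ≤ ρ k * x1 (k - 1) := by
    intro k hkK hgd
    have hk := hK₀ k hkK
    rcases hdich (k - 1) k hkK with h | h
    · exfalso
      have h3 : c₁' * α k ≤ x1 k := le_trans hk.1.1 (hyx1 k).2
      have h5 : α k ≤ K * c₁ * x1 k := by
        have h6 := mul_le_mul_of_nonneg_left h3 (le_of_lt (mul_pos hKpos hc₁))
        have h7 : K * c₁ * (c₁' * α k) = α k := by
          rw [hKdef]
          field_simp
        linarith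
      have h4 : x1 (k - 1) ≤ K * x1 k := by
        refine le_trans h ?_
        rw [div_le_iff₀ hc₁]
        linarith
      linarith
    · have hxα : x1 k ≤ c₂' * α k / c₁ := by
        rw [le_div_iff₀ hc₁]
        have h1 := (hyx1 k).1
        have h2 := hk.1.2
        nlinarith
      have hβne : β k ≠ 0 := (hβpos k).ne'
      have hc₁ne : c₁ ≠ 0 := hc₁.ne'
      have h6 : ρ k * β k = c₂' * α k / c₁ := by
        rw [hρdef]
        field_simp
      have h7 : ρ k * β k ≤ ρ k * x1 (k - 1) :=
        mul_le_mul_of_nonneg_left h (le_of_lt (hρpos k))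
      have hxβ : x1 k ≤ ρ k * β k := by rw [h6]; exact hxα
      exact le_trans hxβ h7
  -- assemble final data
  set x' : ℕ → ℝ := fun i => x1 (g (i + 1)) with hx'def
  set qf : ℝ := Q * K ^ (J' + 1) with hqfdef
  have hKpow1 : (1:ℝ) ≤ K ^ (J' + 1) := one_le_pow₀ (le_of_lt hK1)
  have hKpowpos : (0:ℝ) < K ^ (J' + 1) := pow_pos hKpos _
  have hqfpos : 0 < qf := mul_pos hQpos hKpowpos
  have hqf1 : 1 < qf := by
    rw [hqfdef]
    nlinarith
  have hx'pos : ∀ i, 0 < x' i := fun i => hx1pos _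
  have hx'anti : StrictAnti x' := fun i j hij => hx1anti (hgmono (by omega))
  have hx'ratio : Tendsto (fun i => x' (i + 1) / x' i) atTop (nhds 0) := by
    have hbound : ∀ i, x' (i + 1) / x' i ≤ ρ (g (i + 2)) := by
      intro i
      have hgd : K₀ + 1 ≤ g (i + 2) ∧ K * x1 (g (i + 2)) < x1 (g (i + 2) - 1) :=
        hgood (i + 1)
      have h1 : x1 (g (i + 2)) ≤ ρ (g (i + 2)) * x1 (g (i + 2) - 1) :=
        hgoodstep (g (i + 2)) (by have := hgd.1; omega) hgd.2
      have h2 : x1 (g (i + 2) - 1) ≤ x1 (g (i + 1)) := by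
        apply hx1anti.antitone
        have := hgmono (show i + 1 < i + 2 by omega)
        omega
      have h3 : x' (i + 1) ≤ ρ (g (i + 2)) * x' i :=
        le_trans h1 (mul_le_mul_of_nonneg_left h2 (le_of_lt (hρpos _)))
      rw [div_le_iff₀ (hx'pos i)]
      exact h3
    have hcomp : Tendsto (fun i => ρ (g (i + 2))) atTop (nhds 0) :=
      hρ0.comp (hgmono.comp (strictMono_nat_of_lt_succ fun n => by omega)).tendsto_atTop
    refine tendsto_of_tendsto_of_tendsto_of_le_of_le' tendsto_const_nhds hcomp ?_ ?_
    · filter_upwards with i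
      exact le_of_lt (div_pos (hx'pos (i + 1)) (hx'pos i))
    · filter_upwards with i
      exact hbound i
  have hcgeo : ∀ j d, (∀ m, j < m → m ≤ j + d → x1 (m - 1) ≤ K * x1 m) →
      x1 j ≤ K ^ d * x1 (j + d) := by
    intro j d
    induction d with
    | zero => intro _; simp
    | succ m ih =>
        intro hcl
        have h1 : x1 j ≤ K ^ m * x1 (j + m) := ih fun l hl1 hl2 => hcl l hl1 (by omega)
        have h2 : x1 (j + m) ≤ K * x1 (j + m + 1) := by
          have h0 := hcl (j + m + 1) (by omega) (by omega)
          simpa using h0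
        calc x1 j ≤ K ^ m * x1 (j + m) := h1
          _ ≤ K ^ m * (K * x1 (j + m + 1)) :=
              mul_le_mul_of_nonneg_left h2 (pow_nonneg hKpos.le m)
          _ = K ^ (m + 1) * x1 (j + (m + 1)) := by rw [pow_succ]; ring_nf
  -- final covering
  set t' : ℝ := min (y N₁) (Q⁻¹ * x1 (g 1)) with ht'def
  have ht'pos : 0 < t' :=
    lt_min (hyp N₁) (mul_pos (inv_pos.mpr hQpos) (hx1pos _))
  refine ⟨qf, hqf1, x', hx'anti, hx'pos, hx'ratio, t', ht'pos, ?_⟩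
  rintro e ⟨heE, he0, het'⟩
  refine ⟨?_, he0, het'⟩
  have he1 : e < y N₁ := lt_of_lt_of_le het' (min_le_left _ _)
  obtain ⟨k, hk1, hk2⟩ := cover1 e heE he0 he1
  have hkg : g 1 < k := by
    by_contra hcon
    push_neg at hcon
    have h1 : x1 (g 1) ≤ x1 k := hx1anti.antitone hcon
    have h2 : Q⁻¹ * x1 (g 1) ≤ Q⁻¹ * x1 k :=
      mul_le_mul_of_nonneg_left h1 (le_of_lt (inv_pos.mpr hQpos))
    have h3 : e < Q⁻¹ * x1 (g 1) := lt_of_lt_of_le het' (min_le_right _ _)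
    linarith
  obtain ⟨i, hi1, hi2⟩ := hgbr k (Nat.zero_le k)
  obtain ⟨i', rfl⟩ : ∃ i', i = i' + 1 := by
    rcases Nat.eq_zero_or_pos i with h | h
    · exfalso
      rw [h] at hi2
      have hgg : g (0 + 1) = g 1 := rfl
      omega
    · exact ⟨i - 1, by omega⟩
  have hclosekg : ∀ m, g (i' + 1) < m → m ≤ k → x1 (m - 1) ≤ K * x1 m := by
    intro m h1 h2
    have hnot := (hgS (i' + 1)).2.2 m h1 (by omega)
    have hm : K₀ + 1 ≤ m := by have := (hgood i').1; omega
    by_contra hcon2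
    push_neg at hcon2
    exact hnot ⟨hm, hcon2⟩
  have hkK₀ : K₀ ≤ k := by have := (hgood i').1; omega
  have hdle : k - g (i' + 1) ≤ J' := by
    rcases eq_or_lt_of_le hi1 with heq | hlt
    · omega
    · exact hrun k (g (i' + 1)) hkK₀ hlt hclosekg
  have hchain : x1 (g (i' + 1)) ≤ K ^ (k - g (i' + 1)) * x1 k := by
    have h0 := hcgeo (g (i' + 1)) (k - g (i' + 1))
      (fun m hm1 hm2 => hclosekg m hm1 (by omega))
    rwa [show g (i' + 1) + (k - g (i' + 1)) = k by omega] at h0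
  have hx'le : x' i' ≤ K ^ J' * x1 k := by
    refine le_trans hchain ?_
    exact mul_le_mul_of_nonneg_right
      (pow_le_pow_right₀ (le_of_lt hK1) hdle) (le_of_lt (hx1pos k))
  have hxlex' : x1 k ≤ x' i' := hx1anti.antitone hi1
  rw [Set.mem_iUnion]
  refine ⟨i', Set.mem_Ioo.mpr ⟨?_, ?_⟩⟩
  · -- qf⁻¹ * x' i' < e
    have h1 : qf⁻¹ * x' i' ≤ qf⁻¹ * (K ^ J' * x1 k) :=
      mul_le_mul_of_nonneg_left hx'le (le_of_lt (inv_pos.mpr hqfpos))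
    have h2 : qf⁻¹ * (K ^ J' * x1 k) = Q⁻¹ * K⁻¹ * x1 k := by
      rw [hqfdef, mul_inv, pow_succ, mul_inv]
      have hKJne : (K:ℝ) ^ J' ≠ 0 := ne_of_gt (pow_pos hKpos J')
      field_simp
    have h3 : Q⁻¹ * K⁻¹ * x1 k < Q⁻¹ * x1 k := by
      have hlt : Q⁻¹ * K⁻¹ < Q⁻¹ * 1 :=
        mul_lt_mul_of_pos_left (inv_lt_one_of_one_lt₀ hK1) (inv_pos.mpr hQpos)
      rw [mul_one] at hlt
      exact mul_lt_mul_of_pos_right hlt (hx1pos k)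
    calc qf⁻¹ * x' i' ≤ qf⁻¹ * (K ^ J' * x1 k) := h1
      _ = Q⁻¹ * K⁻¹ * x1 k := h2
      _ < Q⁻¹ * x1 k := h3
      _ < e := hk1
  · -- e < qf * x' i'
    have h2 : Q * x1 k ≤ Q * x' i' := mul_le_mul_of_nonneg_left hxlex' hQpos.le
    have h3 : Q * x' i' ≤ qf * x' i' := by
      apply mul_le_mul_of_nonneg_right _ (hx'pos i').le
      rw [hqfdef]
      nlinarith
    linarith

end Fwd
theorem stmt17 (E : Set ℝ) (hE : E ⊆ Set.Ici 0) :
    CSP E ↔ ∃ q : ℝ, 1 < q ∧ ∃ x : ℕ → ℝ, StrictAnti x ∧ (∀ n, 0 < x n) ∧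
      Filter.Tendsto (fun n => x (n + 1) / x n) Filter.atTop (nhds 0) ∧
      ∃ t : ℝ, 0 < t ∧
        E ∩ Set.Ioo 0 t ⊆ (⋃ n : ℕ, Set.Ioo (q⁻¹ * x n) (q * x n)) ∩ Set.Ioo 0 t := by
  constructor
  · intro hcsp
    by_cases hacc : AccZero E
    · exact fwdDir hE hacc hcsp
    · exact rhs_of_notAcc hacc
  · rintro ⟨q, hq, x, hxa, hxp, hxr, t, ht, hcov⟩
    exact bwdDir hE hq hxa hxp hxr ht hcov
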